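/- arXiv:0809.1048 — 5 statements merged into one kernel-verified Lean document; each statement's English description precedes it below -/
import Mathlib

section
/- The set R = {x ∈ Quaternion ℚ₂ : ‖normSq x‖ ≤ 1} of quaternions over the 2-adic numbers whose reduced norm is a 2-adic integer is a subring of Quaternion ℚ₂: it contains 0 and 1 and is closed under addition, negation and multiplication. -/
open scoped Quaternion

lemma keyZ (a b c d : ℤ_[2]) (ha : ‖a‖ = 1) :
    ((2:ℝ)^(2:ℕ))⁻¹ ≤ ‖a^2+b^2+c^2+d^2‖ := by
  by_contra h
  push_neg at h
  have h3 : a^2+b^2+c^2+d^2 ∈ (Ideal.span {((2:ℕ) : ℤ_[2]) ^ 3} : Ideal ℤ_[2]) := by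
    rw [← PadicInt.norm_le_pow_iff_mem_span_pow,
      PadicInt.norm_le_pow_iff_norm_lt_pow_add_one]
    have he : (((2:ℕ)):ℝ)^((-(3:ℕ):ℤ)+1) = ((2:ℝ)^(2:ℕ))⁻¹ := by
      norm_num [zpow_neg]
    rw [he]; exact h
  rw [← PadicInt.ker_toZModPow, RingHom.mem_ker] at h3
  have hu : IsUnit (PadicInt.toZModPow 3 a) := (PadicInt.isUnit_iff.mpr ha).map _
  have key : ∀ x y z w : ZMod (2^3), IsUnit x → x^2+y^2+z^2+w^2 ≠ 0 := by decide
  exact key _ _ _ _ hu (by simpa using h3)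

lemma keyZsym (a b c d : ℤ_[2]) (h : ‖a‖=1 ∨ ‖b‖=1 ∨ ‖c‖=1 ∨ ‖d‖=1) :
    ((2:ℝ)^(2:ℕ))⁻¹ ≤ ‖a^2+b^2+c^2+d^2‖ := by
  rcases h with h|h|h|h
  · exact keyZ a b c d h
  · rw [show a^2+b^2+c^2+d^2 = b^2+a^2+c^2+d^2 by ring]; exact keyZ b a c d h
  · rw [show a^2+b^2+c^2+d^2 = c^2+b^2+a^2+d^2 by ring]; exact keyZ c b a d h
  · rw [show a^2+b^2+c^2+d^2 = d^2+b^2+c^2+a^2 by ring]; exact keyZ d b c a h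

lemma norm_two_q2 : ‖(2:ℚ_[2])‖ = 2⁻¹ := by
  rw [show (2:ℚ_[2]) = ((2:ℕ):ℚ_[2]) by norm_num, Padic.norm_p]
  norm_num

lemma keyQ (a b c d : ℚ_[2]) : ‖2*a‖^2 ≤ ‖a^2+b^2+c^2+d^2‖ := by
  set M := max (max ‖a‖ ‖b‖) (max ‖c‖ ‖d‖) with hMdef
  have haM : ‖a‖ ≤ M := le_trans (le_max_left _ _) (le_max_left _ _)
  have hbM : ‖b‖ ≤ M := le_trans (le_max_right _ _) (le_max_left _ _)
  have hcM : ‖c‖ ≤ M := le_trans (le_max_left _ _) (le_max_right _ _)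
  have hdM : ‖d‖ ≤ M := le_trans (le_max_right _ _) (le_max_right _ _)
  by_cases hM0 : M = 0
  · have ha : a = 0 := norm_eq_zero.mp (le_antisymm (hM0 ▸ haM) (norm_nonneg _))
    have hb : b = 0 := norm_eq_zero.mp (le_antisymm (hM0 ▸ hbM) (norm_nonneg _))
    have hc : c = 0 := norm_eq_zero.mp (le_antisymm (hM0 ▸ hcM) (norm_nonneg _))
    have hd : d = 0 := norm_eq_zero.mp (le_antisymm (hM0 ▸ hdM) (norm_nonneg _))
    simp [ha, hb, hc, hd]
  have hMpos : 0 < M := lt_of_le_of_ne (le_trans (norm_nonneg a) haM) (Ne.symm hM0)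
  obtain ⟨u, hue, huM⟩ : ∃ u : ℚ_[2], ‖u‖ = M ∧ (u = a ∨ u = b ∨ u = c ∨ u = d) := by
    have : M = ‖a‖ ∨ M = ‖b‖ ∨ M = ‖c‖ ∨ M = ‖d‖ := by
      rw [hMdef]
      rcases max_choice (max ‖a‖ ‖b‖) (max ‖c‖ ‖d‖) with h|h <;> rw [h]
      · rcases max_choice ‖a‖ ‖b‖ with h2|h2 <;> rw [h2] <;> tauto
      · rcases max_choice ‖c‖ ‖d‖ with h2|h2 <;> rw [h2] <;> tauto
    rcases this with h|h|h|h
    exacts [⟨a, h.symm, Or.inl rfl⟩, ⟨b, h.symm, Or.inr (Or.inl rfl)⟩,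
      ⟨c, h.symm, Or.inr (Or.inr (Or.inl rfl))⟩, ⟨d, h.symm, Or.inr (Or.inr (Or.inr rfl))⟩]
  have hu0 : u ≠ 0 := by
    intro h; rw [h, norm_zero] at hue; exact hM0 hue.symm
  have hA : ‖a/u‖ ≤ 1 := by rw [norm_div, hue]; exact div_le_one_of_le₀ haM hMpos.le
  have hB : ‖b/u‖ ≤ 1 := by rw [norm_div, hue]; exact div_le_one_of_le₀ hbM hMpos.le
  have hC : ‖c/u‖ ≤ 1 := by rw [norm_div, hue]; exact div_le_one_of_le₀ hcM hMpos.le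
  have hD : ‖d/u‖ ≤ 1 := by rw [norm_div, hue]; exact div_le_one_of_le₀ hdM hMpos.le
  set A : ℤ_[2] := ⟨a/u, hA⟩ with hAdef
  set B : ℤ_[2] := ⟨b/u, hB⟩ with hBdef
  set C : ℤ_[2] := ⟨c/u, hC⟩ with hCdef
  set D : ℤ_[2] := ⟨d/u, hD⟩ with hDdef
  have h1 : ‖A‖ = 1 ∨ ‖B‖ = 1 ∨ ‖C‖ = 1 ∨ ‖D‖ = 1 := by
    rcases huM with h|h|h|h
    · left; rw [hAdef]; show ‖a/u‖ = 1; rw [← h, div_self hu0, norm_one]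
    · right; left; rw [hBdef]; show ‖b/u‖ = 1
      rw [← h, div_self hu0, norm_one]
    · right; right; left; rw [hCdef]; show ‖c/u‖ = 1
      rw [← h, div_self hu0, norm_one]
    · right; right; right; rw [hDdef]; show ‖d/u‖ = 1
      rw [← h, div_self hu0, norm_one]
  have hkey := keyZsym A B C D h1
  have hcoe : ‖(A^2+B^2+C^2+D^2 : ℤ_[2])‖ = ‖(a/u)^2+(b/u)^2+(c/u)^2+(d/u)^2‖ := by
    rw [PadicInt.norm_def]; push_cast; rfl
  have hsum : (a/u)^2+(b/u)^2+(c/u)^2+(d/u)^2 = (a^2+b^2+c^2+d^2)/u^2 := by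
    field_simp
  have hnorm : ‖a^2+b^2+c^2+d^2‖ = M^2 * ‖(a/u)^2+(b/u)^2+(c/u)^2+(d/u)^2‖ := by
    rw [hsum, norm_div, norm_pow, hue]
    field_simp
  calc ‖2*a‖^2 = (2⁻¹ * ‖a‖)^2 := by rw [norm_mul, norm_two_q2]
  _ ≤ (2⁻¹ * M)^2 := by
      apply pow_le_pow_left₀ (by positivity)
      exact mul_le_mul_of_nonneg_left haM (by norm_num)
  _ = M^2 * ((2:ℝ)^(2:ℕ))⁻¹ := by ring
  _ ≤ M^2 * ‖(a/u)^2+(b/u)^2+(c/u)^2+(d/u)^2‖ := by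
      apply mul_le_mul_of_nonneg_left _ (by positivity)
      rw [← hcoe]; exact hkey
  _ = ‖a^2+b^2+c^2+d^2‖ := hnorm.symm

lemma cross_term (q : ℍ[ℚ_[2]]) (h : ‖Quaternion.normSq q‖ ≤ 1) : ‖2*q.re‖ ≤ 1 := by
  have h2 : ‖2*q.re‖^2 ≤ ‖Quaternion.normSq q‖ := by
    rw [Quaternion.normSq_def']
    exact keyQ q.re q.imI q.imJ q.imK
  nlinarith [norm_nonneg (2*q.re)]

/-- The set `R = {x ∈ ℍ[ℚ₂] : ‖normSq x‖ ≤ 1}` of quaternions over the 2-adic numbers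
whose reduced norm is a 2-adic integer is a subring of `ℍ[ℚ₂]`: it contains 0 and 1
and is closed under addition, negation and multiplication. -/
theorem hurwitz_integers_subring :
    (0 : ℍ[ℚ_[2]]) ∈ {x : ℍ[ℚ_[2]] | ‖Quaternion.normSq x‖ ≤ 1} ∧
    (1 : ℍ[ℚ_[2]]) ∈ {x : ℍ[ℚ_[2]] | ‖Quaternion.normSq x‖ ≤ 1} ∧
    (∀ x y : ℍ[ℚ_[2]], ‖Quaternion.normSq x‖ ≤ 1 → ‖Quaternion.normSq y‖ ≤ 1 →
      ‖Quaternion.normSq (x + y)‖ ≤ 1) ∧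
    (∀ x : ℍ[ℚ_[2]], ‖Quaternion.normSq x‖ ≤ 1 → ‖Quaternion.normSq (-x)‖ ≤ 1) ∧
    (∀ x y : ℍ[ℚ_[2]], ‖Quaternion.normSq x‖ ≤ 1 → ‖Quaternion.normSq y‖ ≤ 1 →
      ‖Quaternion.normSq (x * y)‖ ≤ 1) := by
  refine ⟨by simp, by simp, ?_, ?_, ?_⟩
  · intro x y hx hy
    have hq : ‖Quaternion.normSq (x * star y)‖ ≤ 1 := by
      rw [map_mul, Quaternion.normSq_star, norm_mul]
      exact mul_le_one₀ hx (norm_nonneg _) hy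
    have hc : ‖2*(x * star y).re‖ ≤ 1 := cross_term _ hq
    rw [Quaternion.normSq_add]
    calc ‖Quaternion.normSq x + Quaternion.normSq y + 2 * (x * star y).re‖
        ≤ max ‖Quaternion.normSq x + Quaternion.normSq y‖ ‖2 * (x * star y).re‖ :=
          Padic.nonarchimedean _ _
      _ ≤ max (max ‖Quaternion.normSq x‖ ‖Quaternion.normSq y‖) ‖2 * (x * star y).re‖ :=
          max_le_max (Padic.nonarchimedean _ _) le_rfl
      _ ≤ 1 := by
          apply max_le (max_le hx hy) hc
  · intro x hx
    rwa [Quaternion.normSq_neg]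
  · intro x y hx hy
    rw [map_mul, norm_mul]
    exact mul_le_one₀ hx (norm_nonneg _) hy
end

section
/- Every element x of Quaternion ℚ₂ with ‖normSq x‖ = 1 is a unit of the ring R = {y : ‖normSq y‖ ≤ 1}, with two-sided inverse again in R. Consequently every proper two-sided ideal of R is contained in 𝔪 = {x : ‖normSq x‖ ≤ 1/2}, i.e. 𝔪 is the maximal two-sided ideal of R. -/
open scoped Quaternion

lemma padic_norm_eq_one_of {a : ℚ_[2]} (h1 : ‖a‖ ≤ 1) (h2 : ¬ ‖a‖ ≤ 1 / 2) : ‖a‖ = 1 := by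
  have ha : a ≠ 0 := by
    rintro rfl; simp at h2
  rw [Padic.norm_eq_zpow_neg_valuation ha] at h1 h2 ⊢
  push_cast at h1 h2 ⊢
  have h2' : ¬ ((2 : ℝ) ^ (-a.valuation) ≤ (2:ℝ) ^ (-1 : ℤ)) := by
    simpa using h2
  have hv1 : -a.valuation ≤ 0 := by
    by_contra hc
    push_neg at hc
    have := one_lt_zpow₀ (by norm_num : (1:ℝ) < 2) hc
    linarith
  have hv2 : -1 < -a.valuation := by
    by_contra hc
    push_neg at hc
    exact h2' (zpow_le_zpow_right₀ (by norm_num) hc)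
  have : -a.valuation = 0 := by omega
  rw [this, zpow_zero]

/-- Every `x ∈ ℍ[ℚ₂]` with `‖normSq x‖ = 1` is a unit of the ring
`R = {y : ‖normSq y‖ ≤ 1}` with two-sided inverse again in `R`; consequently every
proper two-sided ideal of `R` is contained in `𝔪 = {x : ‖normSq x‖ ≤ 1/2}`, i.e.
`𝔪` is the maximal two-sided ideal of `R`. -/
theorem m_is_maximal_two_sided_ideal :
    (∀ x : ℍ[ℚ_[2]], ‖Quaternion.normSq x‖ = 1 →
      ∃ y : ℍ[ℚ_[2]], ‖Quaternion.normSq y‖ ≤ 1 ∧ x * y = 1 ∧ y * x = 1) ∧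
    (∀ I : Set ℍ[ℚ_[2]],
      I ⊆ {x : ℍ[ℚ_[2]] | ‖Quaternion.normSq x‖ ≤ 1} →
      (0 : ℍ[ℚ_[2]]) ∈ I →
      (∀ x ∈ I, ∀ y ∈ I, x + y ∈ I) →
      (∀ r : ℍ[ℚ_[2]], ‖Quaternion.normSq r‖ ≤ 1 → ∀ x ∈ I, r * x ∈ I ∧ x * r ∈ I) →
      I ≠ {x : ℍ[ℚ_[2]] | ‖Quaternion.normSq x‖ ≤ 1} →
      I ⊆ {x : ℍ[ℚ_[2]] | ‖Quaternion.normSq x‖ ≤ 1 / 2}) := by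
  have main : ∀ x : ℍ[ℚ_[2]], ‖Quaternion.normSq x‖ = 1 →
      ∃ y : ℍ[ℚ_[2]], ‖Quaternion.normSq y‖ ≤ 1 ∧ x * y = 1 ∧ y * x = 1 := by
    intro x hx
    have hns : Quaternion.normSq x ≠ 0 := by
      intro h; rw [h] at hx; simp at hx
    refine ⟨(Quaternion.normSq x)⁻¹ • star x, ?_, ?_, ?_⟩
    · rw [Quaternion.normSq_smul, Quaternion.normSq_star]
      rw [norm_mul, norm_pow, norm_inv, hx]
      norm_num
    · rw [← Quaternion.coe_mul_eq_smul, ← mul_assoc, ← Quaternion.coe_commutes, mul_assoc,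
        Quaternion.self_mul_star, ← Quaternion.coe_mul,
        inv_mul_cancel₀ hns, Quaternion.coe_one]
    · rw [← Quaternion.coe_mul_eq_smul, mul_assoc, Quaternion.star_mul_self, ← Quaternion.coe_mul,
        inv_mul_cancel₀ hns, Quaternion.coe_one]
  refine ⟨main, ?_⟩
  intro I hIR h0 hadd hmul hne x hxI
  by_contra hx2
  have hx1 : ‖Quaternion.normSq x‖ ≤ 1 := hIR hxI
  have hx : ‖Quaternion.normSq x‖ = 1 := padic_norm_eq_one_of hx1 hx2
  obtain ⟨y, hy, hxy, hyx⟩ := main x hx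
  have h1 : (1 : ℍ[ℚ_[2]]) ∈ I := hyx ▸ (hmul y hy x hxI).1
  apply hne
  apply Set.Subset.antisymm hIR
  intro r hr
  simpa using (hmul r hr 1 h1).1
end

section
/- The unit group (Quaternion ℚ₂)ˣ is generated by the set consisting of the unit a = (1 + i + j + k)/2, the unit b = 1 + i, and all units u with ‖normSq (u − 1)‖ ≤ 1/2; that is, the subgroup closure of {a, b} ∪ (1 + 𝔪) in (Quaternion ℚ₂)ˣ is the whole group. Equivalently, the quotient group Dˣ/(1 + 𝔪) is generated by the images of a and b. -/
namespace QGen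

def od3 (e : ZMod (2^3)) : Prop := ZMod.castHom (pow_dvd_pow 2 (by norm_num : 1 ≤ 3)) (ZMod (2^1)) e ≠ 0
def od2 (e : ZMod (2^2)) : Prop := ZMod.castHom (pow_dvd_pow 2 (by norm_num : 1 ≤ 2)) (ZMod (2^1)) e ≠ 0

instance dod3 : DecidablePred od3 := fun e => by unfold od3; infer_instance
instance dod2 : DecidablePred od2 := fun e => by unfold od2; infer_instance

theorem F1 : ∀ e₀ e₁ e₂ e₃ : ZMod (2^3), (od3 e₀ ∨ od3 e₁ ∨ od3 e₂ ∨ od3 e₃) →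
    e₀^2 + e₁^2 + e₂^2 + e₃^2 ≠ 0 := by decide

theorem G2 : ∀ e₀ e₁ e₂ e₃ : ZMod (2^2), e₀^2 + e₁^2 + e₂^2 + e₃^2 = 0 →
    (od2 e₀ ∨ od2 e₁ ∨ od2 e₂ ∨ od2 e₃) → od2 e₀ := by decide

theorem F2 (e₀ e₁ e₂ e₃ : ZMod (2^2)) (h : e₀^2 + e₁^2 + e₂^2 + e₃^2 = 0)
    (ho : od2 e₀ ∨ od2 e₁ ∨ od2 e₂ ∨ od2 e₃) : od2 e₀ ∧ od2 e₁ ∧ od2 e₂ ∧ od2 e₃ :=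
  ⟨G2 e₀ e₁ e₂ e₃ h ho,
   G2 e₁ e₀ e₂ e₃ (by rw [← h]; ring) (by tauto),
   G2 e₂ e₁ e₀ e₃ (by rw [← h]; ring) (by tauto),
   G2 e₃ e₁ e₂ e₀ (by rw [← h]; ring) (by tauto)⟩

theorem F3 : ∀ e₀ e₁ : ZMod (2^1), e₀ ≠ 0 → e₁ ≠ 0 → e₀ - e₁ = 0 := by decide

theorem normle (x : ℤ_[2]) (n : ℕ) : ‖x‖ ≤ ((2:ℝ)^n)⁻¹ ↔ PadicInt.toZModPow n x = 0 := by
  rw [show ((2:ℝ)^n)⁻¹ = (2:ℝ)^(-(n:ℤ)) by rw [zpow_neg, zpow_natCast],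
    ← RingHom.mem_ker, PadicInt.ker_toZModPow]
  exact_mod_cast PadicInt.norm_le_pow_iff_mem_span_pow x n

theorem normone (x : ℤ_[2]) : ‖x‖ = 1 ↔ PadicInt.toZModPow 1 x ≠ 0 := by
  rw [ne_eq, ← normle, show (((2:ℝ)^(1:ℕ))⁻¹) = 1/2 by norm_num]
  constructor
  · intro h h2; rw [h] at h2; norm_num at h2
  · intro h
    refine le_antisymm (PadicInt.norm_le_one x) ?_
    by_contra hlt
    push_neg at hlt
    have := (PadicInt.norm_le_pow_iff_norm_lt_pow_add_one x (-1)).2 (by norm_num at hlt ⊢; exact hlt)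
    norm_num at this
    exact h this

theorem odd_sub (x y : ℤ_[2]) (hx : ‖x‖ = 1) (hy : ‖y‖ = 1) : ‖x - y‖ ≤ 1/2 := by
  rw [show (1/2 : ℝ) = ((2:ℝ)^(1:ℕ))⁻¹ by norm_num, normle, map_sub]
  exact F3 _ _ ((normone x).1 hx) ((normone y).1 hy)

end QGen

namespace QGen

theorem od3_iff (z : ℤ_[2]) : od3 (PadicInt.toZModPow 3 z) ↔ ‖z‖ = 1 := by
  unfold od3
  rw [normone]
  have h := PadicInt.zmod_cast_comp_toZModPow (p := 2) 1 3 (by norm_num)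
  constructor
  · intro hne h1; apply hne; rw [← RingHom.comp_apply, h, h1]
  · intro hne h1; apply hne; rw [← h1, ← RingHom.comp_apply, h]

theorem od2_iff (z : ℤ_[2]) : od2 (PadicInt.toZModPow 2 z) ↔ ‖z‖ = 1 := by
  unfold od2
  rw [normone]
  have h := PadicInt.zmod_cast_comp_toZModPow (p := 2) 1 2 (by norm_num)
  constructor
  · intro hne h1; apply hne; rw [← RingHom.comp_apply, h, h1]
  · intro hne h1; apply hne; rw [← h1, ← RingHom.comp_apply, h]

theorem L1aux (g c₀ c₁ c₂ c₃ : ℚ_[2]) (hg : 1 < ‖g‖)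
    (h₀ : ‖c₀‖ ≤ ‖g‖) (h₁ : ‖c₁‖ ≤ ‖g‖) (h₂ : ‖c₂‖ ≤ ‖g‖) (h₃ : ‖c₃‖ ≤ ‖g‖)
    (hsome : g = c₀ ∨ g = c₁ ∨ g = c₂ ∨ g = c₃)
    (hQ : ‖c₀^2 + c₁^2 + c₂^2 + c₃^2‖ = 1) :
    ‖c₀‖ = 2 ∧ ‖c₁‖ = 2 ∧ ‖c₂‖ = 2 ∧ ‖c₃‖ = 2 := by
  have hg0 : g ≠ 0 := by intro h; rw [h, norm_zero] at hg; linarith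
  have hgn : ‖g‖ ≠ 0 := by positivity
  have hd : ∀ c : ℚ_[2], ‖c‖ ≤ ‖g‖ → ‖c / g‖ ≤ 1 := by
    intro c hc
    rw [norm_div, div_le_one (by positivity)]; exact hc
  set z₀ : ℤ_[2] := ⟨c₀ / g, hd c₀ h₀⟩ with hz₀
  set z₁ : ℤ_[2] := ⟨c₁ / g, hd c₁ h₁⟩ with hz₁
  set z₂ : ℤ_[2] := ⟨c₂ / g, hd c₂ h₂⟩ with hz₂
  set z₃ : ℤ_[2] := ⟨c₃ / g, hd c₃ h₃⟩ with hz₃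
  set Q : ℤ_[2] := z₀^2 + z₁^2 + z₂^2 + z₃^2 with hQdef
  have hcoe : ((Q : ℤ_[2]) : ℚ_[2]) = (c₀/g)^2 + (c₁/g)^2 + (c₂/g)^2 + (c₃/g)^2 := by
    push_cast [hQdef, hz₀, hz₁, hz₂, hz₃]; rfl
  -- ‖g‖^2 * ‖Q‖ = 1
  have hsum : c₀^2 + c₁^2 + c₂^2 + c₃^2 = g^2 * ((Q : ℤ_[2]) : ℚ_[2]) := by
    rw [hcoe]; field_simp
  have hQ2 : ‖g‖^2 * ‖Q‖ = 1 := by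
    have : ‖g^2 * ((Q : ℤ_[2]) : ℚ_[2])‖ = 1 := by rw [← hsum]; exact hQ
    rw [norm_mul, norm_pow] at this
    exact this
  -- some zᵢ has norm 1
  have hone : ‖z₀‖ = 1 ∨ ‖z₁‖ = 1 ∨ ‖z₂‖ = 1 ∨ ‖z₃‖ = 1 := by
    rcases hsome with h | h | h | h
    · left; show ‖c₀/g‖ = 1; rw [← h, div_self hg0, norm_one]
    · right; left; show ‖c₁/g‖ = 1; rw [← h, div_self hg0, norm_one]
    · right; right; left; show ‖c₂/g‖ = 1; rw [← h, div_self hg0, norm_one]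
    · right; right; right; show ‖c₃/g‖ = 1; rw [← h, div_self hg0, norm_one]
  -- F1: Q not ≡ 0 mod 8
  have hF1 : ¬ (PadicInt.toZModPow 3 Q = 0) := by
    have hdisj : od3 (PadicInt.toZModPow 3 z₀) ∨ od3 (PadicInt.toZModPow 3 z₁) ∨
        od3 (PadicInt.toZModPow 3 z₂) ∨ od3 (PadicInt.toZModPow 3 z₃) := by
      rcases hone with h | h | h | h
      · exact Or.inl ((od3_iff _).2 h)
      · exact Or.inr (Or.inl ((od3_iff _).2 h))
      · exact Or.inr (Or.inr (Or.inl ((od3_iff _).2 h)))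
      · exact Or.inr (Or.inr (Or.inr ((od3_iff _).2 h)))
    have := F1 _ _ _ _ hdisj
    rw [hQdef]
    push_cast [map_add, map_pow]
    exact this
  have hQ14 : (1:ℝ)/4 ≤ ‖Q‖ := by
    by_contra hlt
    push_neg at hlt
    have h3 : ‖Q‖ ≤ ((2:ℝ)^(3:ℕ))⁻¹ := by
      have := (PadicInt.norm_le_pow_iff_norm_lt_pow_add_one Q (-3)).2 (by norm_num at hlt ⊢; exact hlt)
      norm_num at this ⊢; exact this
    exact hF1 ((normle Q 3).1 h3)
  -- ‖g‖ ≥ 2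
  have hg2 : 2 ≤ ‖g‖ := by
    have h2 : ‖g⁻¹‖ ≤ (2:ℝ)^(-1:ℤ) :=
      (Padic.norm_le_pow_iff_norm_lt_pow_add_one g⁻¹ (-1)).2
        (by rw [norm_inv]; norm_num; exact inv_lt_one_of_one_lt₀ hg)
    rw [norm_inv] at h2
    have h3 : ‖g‖⁻¹ ≤ 1/2 := by rw [show ((2:ℝ)^(-1:ℤ)) = 1/2 by norm_num] at h2; exact h2
    have h4 : ‖g‖ * ‖g‖⁻¹ = 1 := mul_inv_cancel₀ hgn
    nlinarith [h3, h4, hg]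
  have hgeq : ‖g‖ = 2 := by
    have hQpos : (0:ℝ) < ‖Q‖ := lt_of_lt_of_le (by norm_num) hQ14
    have hle : ‖g‖^2 ≤ 4 := by nlinarith [hQ2, hQ14]
    nlinarith
  have hQq : ‖Q‖ = 1/4 := by
    rw [hgeq] at hQ2; nlinarith
  -- mod 4: all odd
  have hmod4 : PadicInt.toZModPow 2 Q = 0 := by
    apply (normle Q 2).1
    rw [hQq]; norm_num
  have hall := F2 (PadicInt.toZModPow 2 z₀) (PadicInt.toZModPow 2 z₁)
      (PadicInt.toZModPow 2 z₂) (PadicInt.toZModPow 2 z₃)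
      (by rw [← map_pow, ← map_pow, ← map_pow, ← map_pow, ← map_add, ← map_add, ← map_add, ← hQdef]
          exact hmod4)
      (by rcases hone with h | h | h | h
          · exact Or.inl ((od2_iff _).2 h)
          · exact Or.inr (Or.inl ((od2_iff _).2 h))
          · exact Or.inr (Or.inr (Or.inl ((od2_iff _).2 h)))
          · exact Or.inr (Or.inr (Or.inr ((od2_iff _).2 h))))
  obtain ⟨o₀, o₁, o₂, o₃⟩ := hall
  have key : ∀ (z : ℤ_[2]) (c : ℚ_[2]), (z : ℚ_[2]) = c / g → ‖z‖ = 1 → ‖c‖ = 2 := by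
    intro z c hzc hno
    have h1 : ‖c/g‖ = 1 := by rw [← hzc]; exact hno
    rw [norm_div, div_eq_one_iff_eq hgn] at h1
    rw [h1, hgeq]
  exact ⟨key z₀ c₀ rfl ((od2_iff z₀).1 o₀), key z₁ c₁ rfl ((od2_iff z₁).1 o₁),
    key z₂ c₂ rfl ((od2_iff z₂).1 o₂), key z₃ c₃ rfl ((od2_iff z₃).1 o₃)⟩

end QGen

namespace QGen

theorem L1 (c₀ c₁ c₂ c₃ : ℚ_[2]) (hQ : ‖c₀^2 + c₁^2 + c₂^2 + c₃^2‖ = 1) :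
    (‖c₀‖ ≤ 1 ∧ ‖c₁‖ ≤ 1 ∧ ‖c₂‖ ≤ 1 ∧ ‖c₃‖ ≤ 1) ∨
    (‖c₀‖ = 2 ∧ ‖c₁‖ = 2 ∧ ‖c₂‖ = 2 ∧ ‖c₃‖ = 2) := by
  by_cases hall : ‖c₀‖ ≤ 1 ∧ ‖c₁‖ ≤ 1 ∧ ‖c₂‖ ≤ 1 ∧ ‖c₃‖ ≤ 1
  · exact Or.inl hall
  right
  set M : ℝ := max (max ‖c₀‖ ‖c₁‖) (max ‖c₂‖ ‖c₃‖) with hM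
  have hb₀ : ‖c₀‖ ≤ M := le_max_of_le_left (le_max_left _ _)
  have hb₁ : ‖c₁‖ ≤ M := le_max_of_le_left (le_max_right _ _)
  have hb₂ : ‖c₂‖ ≤ M := le_max_of_le_right (le_max_left _ _)
  have hb₃ : ‖c₃‖ ≤ M := le_max_of_le_right (le_max_right _ _)
  have hM1 : 1 < M := by
    by_contra hle
    push_neg at hle
    exact hall ⟨le_trans hb₀ hle, le_trans hb₁ hle, le_trans hb₂ hle, le_trans hb₃ hle⟩
  have hMc : M = ‖c₀‖ ∨ M = ‖c₁‖ ∨ M = ‖c₂‖ ∨ M = ‖c₃‖ := by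
    rcases max_choice (max ‖c₀‖ ‖c₁‖) (max ‖c₂‖ ‖c₃‖) with h | h <;>
      rw [hM, h] <;>
      [rcases max_choice ‖c₀‖ ‖c₁‖ with h2 | h2; rcases max_choice ‖c₂‖ ‖c₃‖ with h2 | h2] <;>
      simp [h2]
  rcases hMc with h | h | h | h
  · exact L1aux c₀ c₀ c₁ c₂ c₃ (h ▸ hM1) le_rfl (h ▸ hb₁) (h ▸ hb₂) (h ▸ hb₃) (Or.inl rfl) hQ
  · exact L1aux c₁ c₀ c₁ c₂ c₃ (h ▸ hM1) (h ▸ hb₀) le_rfl (h ▸ hb₂) (h ▸ hb₃)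
      (Or.inr (Or.inl rfl)) hQ
  · exact L1aux c₂ c₀ c₁ c₂ c₃ (h ▸ hM1) (h ▸ hb₀) (h ▸ hb₁) le_rfl (h ▸ hb₃)
      (Or.inr (Or.inr (Or.inl rfl))) hQ
  · exact L1aux c₃ c₀ c₁ c₂ c₃ (h ▸ hM1) (h ▸ hb₀) (h ▸ hb₁) (h ▸ hb₂) le_rfl
      (Or.inr (Or.inr (Or.inr rfl))) hQ

theorem L2 (c₀ c₁ c₂ c₃ : ℚ_[2]) (h₀ : ‖c₀‖ ≤ 1) (h₁ : ‖c₁‖ ≤ 1) (h₂ : ‖c₂‖ ≤ 1)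
    (h₃ : ‖c₃‖ ≤ 1) (hQ : ‖c₀^2 + c₁^2 + c₂^2 + c₃^2‖ = 1) :
    ‖(c₀ - 1)^2 + c₁^2 + c₂^2 + c₃^2‖ ≤ 1/2 := by
  set z₀ : ℤ_[2] := ⟨c₀, h₀⟩ with hz₀
  set z₁ : ℤ_[2] := ⟨c₁, h₁⟩ with hz₁
  set z₂ : ℤ_[2] := ⟨c₂, h₂⟩ with hz₂
  set z₃ : ℤ_[2] := ⟨c₃, h₃⟩ with hz₃
  set Q : ℤ_[2] := z₀^2 + z₁^2 + z₂^2 + z₃^2 with hQdef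
  have hQn : ‖Q‖ = 1 := by
    have : ((Q : ℤ_[2]) : ℚ_[2]) = c₀^2 + c₁^2 + c₂^2 + c₃^2 := by
      push_cast [hQdef, hz₀, hz₁, hz₂, hz₃]; rfl
    show ‖((Q : ℤ_[2]) : ℚ_[2])‖ = 1
    rw [this]; exact hQ
  have hQ1 : PadicInt.toZModPow 1 Q ≠ 0 := (normone Q).1 hQn
  have hQe : PadicInt.toZModPow 1 Q = 1 := by
    have : ∀ e : ZMod (2^1), e ≠ 0 → e = 1 := by decide
    exact this _ hQ1
  set T : ℤ_[2] := (z₀ - 1)^2 + z₁^2 + z₂^2 + z₃^2 with hT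
  have hTQ : T = Q - 2*z₀ + 1 := by rw [hT, hQdef]; ring
  have h2z : PadicInt.toZModPow 1 (2:ℤ_[2]) = 0 := by
    rw [show (2:ℤ_[2]) = 1+1 by norm_num, map_add, map_one]
    decide
  have hT0 : PadicInt.toZModPow 1 T = 0 := by
    rw [hTQ, map_add, map_sub, map_mul, map_one, hQe, h2z, zero_mul, sub_zero]
    decide
  have hTn : ‖T‖ ≤ 1/2 := by
    have := (normle T 1).2 hT0
    norm_num at this ⊢; exact this
  have hcoe : ((T : ℤ_[2]) : ℚ_[2]) = (c₀ - 1)^2 + c₁^2 + c₂^2 + c₃^2 := by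
    push_cast [hT, hz₀, hz₁, hz₂, hz₃]; rfl
  rw [← hcoe]; exact hTn

theorem odd_subQ (x y : ℚ_[2]) (hx : ‖x‖ = 2) (hy : ‖y‖ = 2) : ‖x - y‖ ≤ 1 := by
  have h2 : ‖(2:ℚ_[2])‖ = 1/2 := by
    rw [show ((2:ℚ_[2])) = ((2:ℕ):ℚ_[2]) by norm_num]
    rw [Padic.norm_p (p := 2)]; norm_num
  have hx2 : ‖(2:ℚ_[2]) * x‖ ≤ 1 := by rw [norm_mul, h2, hx]; norm_num
  have hy2 : ‖(2:ℚ_[2]) * y‖ ≤ 1 := by rw [norm_mul, h2, hy]; norm_num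
  set zx : ℤ_[2] := ⟨2*x, hx2⟩ with hzxdef
  set zy : ℤ_[2] := ⟨2*y, hy2⟩ with hzydef
  have hzx : ‖zx‖ = 1 := by show ‖(2:ℚ_[2])*x‖ = 1; rw [norm_mul, h2, hx]; norm_num
  have hzy : ‖zy‖ = 1 := by show ‖(2:ℚ_[2])*y‖ = 1; rw [norm_mul, h2, hy]; norm_num
  have hds := odd_sub _ _ hzx hzy
  have hcoe : ((zx - zy : ℤ_[2]) : ℚ_[2]) = 2*x - 2*y := by
    push_cast [hzxdef, hzydef]; rfl
  have hsub : ‖(2:ℚ_[2])*x - 2*y‖ ≤ 1/2 := by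
    rw [← hcoe]; exact hds
  have : ‖(2:ℚ_[2])*(x-y)‖ ≤ 1/2 := by rw [mul_sub]; exact hsub
  rw [norm_mul, h2] at this
  linarith

end QGen


namespace QGen
open Quaternion


noncomputable def Aq : ℍ[ℚ_[2]] := ⟨2⁻¹, 2⁻¹, 2⁻¹, 2⁻¹⟩

theorem normSq_Aq : normSq Aq = 1 := by
  rw [normSq_def']
  show (2⁻¹:ℚ_[2])^2 + 2⁻¹^2 + 2⁻¹^2 + 2⁻¹^2 = 1
  have h2 : (2:ℚ_[2]) ≠ 0 := two_ne_zero
  field_simp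
  norm_num

theorem Aq_mul_Aq : Aq * Aq = Aq - 1 := by
  have h2 : (2:ℚ_[2]) ≠ 0 := two_ne_zero
  ext <;> simp only [Quaternion.re_mul, Quaternion.imI_mul, Quaternion.imJ_mul,
    Quaternion.imK_mul, Quaternion.re_sub, Quaternion.imI_sub, Quaternion.imJ_sub,
    Quaternion.imK_sub, Quaternion.re_one, Quaternion.imI_one, Quaternion.imJ_one,
    Quaternion.imK_one] <;> simp only [Aq] <;> field_simp <;> ring

theorem normSq_sub_one (w : ℍ[ℚ_[2]]) :
    normSq (w - 1) = (w.re - 1)^2 + w.imI^2 + w.imJ^2 + w.imK^2 := by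
  rw [normSq_def']
  simp [sub_zero]

theorem resid (w : ℍ[ℚ_[2]]) (hw : ‖normSq w‖ = 1) :
    ‖normSq (w - 1)‖ ≤ 1/2 ∨ ‖normSq (w * Aq - 1)‖ ≤ 1/2 ∨
      ‖normSq (w * Aq * Aq - 1)‖ ≤ 1/2 := by
  have hn : ‖w.re^2 + w.imI^2 + w.imJ^2 + w.imK^2‖ = 1 := by rw [← normSq_def']; exact hw
  have hwA : ‖normSq (w * Aq)‖ = 1 := by rw [map_mul, normSq_Aq, mul_one]; exact hw
  have hn' : ‖(w*Aq).re^2 + (w*Aq).imI^2 + (w*Aq).imJ^2 + (w*Aq).imK^2‖ = 1 := by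
    rw [← normSq_def']; exact hwA
  rcases L1 _ _ _ _ hn with ⟨b₀, b₁, b₂, b₃⟩ | ⟨b₀, b₁, b₂, b₃⟩
  · left
    rw [normSq_sub_one]
    exact L2 _ _ _ _ b₀ b₁ b₂ b₃ hn
  rcases L1 _ _ _ _ hn' with ⟨c₀, c₁, c₂, c₃⟩ | ⟨c₀, c₁, c₂, c₃⟩
  · right; left
    rw [normSq_sub_one]
    exact L2 _ _ _ _ c₀ c₁ c₂ c₃ hn'
  · right; right
    have hww : w * Aq * Aq = w * Aq - w := by
      rw [mul_assoc, Aq_mul_Aq, mul_sub, mul_one]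
    have hwAA : ‖normSq (w * Aq * Aq)‖ = 1 := by
      rw [map_mul, normSq_Aq, mul_one]; exact hwA
    have hn'' : ‖(w*Aq*Aq).re^2 + (w*Aq*Aq).imI^2 + (w*Aq*Aq).imJ^2 + (w*Aq*Aq).imK^2‖ = 1 := by
      rw [← normSq_def']; exact hwAA
    have d₀ : ‖(w*Aq*Aq).re‖ ≤ 1 := by rw [hww]; exact odd_subQ _ _ c₀ b₀
    have d₁ : ‖(w*Aq*Aq).imI‖ ≤ 1 := by rw [hww]; exact odd_subQ _ _ c₁ b₁
    have d₂ : ‖(w*Aq*Aq).imJ‖ ≤ 1 := by rw [hww]; exact odd_subQ _ _ c₂ b₂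
    have d₃ : ‖(w*Aq*Aq).imK‖ ≤ 1 := by rw [hww]; exact odd_subQ _ _ c₃ b₃
    rw [normSq_sub_one]
    exact L2 _ _ _ _ d₀ d₁ d₂ d₃ hn''

end QGen


namespace QGen
open Quaternion

noncomputable def Bq : ℍ[ℚ_[2]] := ⟨1, 1, 0, 0⟩

theorem normSq_Bq : normSq Bq = 2 := by
  rw [normSq_def']
  show (1:ℚ_[2])^2 + 1^2 + 0^2 + 0^2 = 2
  norm_num

theorem norm_two : ‖(2:ℚ_[2])‖ = 1/2 := by
  rw [show ((2:ℚ_[2])) = ((2:ℕ):ℚ_[2]) by norm_num]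
  rw [Padic.norm_p (p := 2)]; norm_num

noncomputable def Au : ℍ[ℚ_[2]]ˣ :=
  ⟨Aq, star Aq,
   by rw [self_mul_star, normSq_Aq]; exact Quaternion.coe_one,
   by rw [star_mul_self, normSq_Aq]; exact Quaternion.coe_one⟩

noncomputable def Bu : ℍ[ℚ_[2]]ˣ :=
  ⟨Bq, (2⁻¹:ℚ_[2]) • star Bq,
   by have : SMulCommClass ℚ_[2] ℍ[ℚ_[2]] ℍ[ℚ_[2]] := ⟨fun r x y => (Algebra.mul_smul_comm r x y).symm⟩
      rw [mul_smul_comm, self_mul_star, normSq_Bq]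
      ext <;> simp,
   by have : IsScalarTower ℚ_[2] ℍ[ℚ_[2]] ℍ[ℚ_[2]] := ⟨fun r x y => Algebra.smul_mul_assoc r x y⟩
      rw [smul_mul_assoc, star_mul_self, normSq_Bq]
      ext <;> simp⟩

end QGen

open scoped Quaternion

/-- The unit group `ℍ[ℚ₂]ˣ` is generated by the unit `a = (1 + i + j + k)/2`, the unit
`b = 1 + i`, and all units `u` with `‖normSq (u − 1)‖ ≤ 1/2` (the group `1 + 𝔪`):
the subgroup closure of `{a, b} ∪ (1 + 𝔪)` in `ℍ[ℚ₂]ˣ` is the whole group. -/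
theorem units_generated_by_a_b_and_one_add_m :
    ∀ i j k a b : ℍ[ℚ_[2]],
      i = ⟨0, 1, 0, 0⟩ → j = ⟨0, 0, 1, 0⟩ → k = ⟨0, 0, 0, 1⟩ →
      a = ((2 : ℚ_[2])⁻¹) • (1 + i + j + k) →
      b = 1 + i →
      Subgroup.closure {u : ℍ[ℚ_[2]]ˣ |
        (u : ℍ[ℚ_[2]]) = a ∨ (u : ℍ[ℚ_[2]]) = b ∨
          ‖Quaternion.normSq ((u : ℍ[ℚ_[2]]) - 1)‖ ≤ 1 / 2} = ⊤ := by
  intro i j k a b hi hj hk ha hb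
  subst hi hj hk ha hb
  set S : Set ℍ[ℚ_[2]]ˣ := {u : ℍ[ℚ_[2]]ˣ |
      (u : ℍ[ℚ_[2]]) = ((2 : ℚ_[2])⁻¹) • (1 + ⟨0,1,0,0⟩ + ⟨0,0,1,0⟩ + ⟨0,0,0,1⟩) ∨
      (u : ℍ[ℚ_[2]]) = 1 + ⟨0,1,0,0⟩ ∨
      ‖Quaternion.normSq ((u : ℍ[ℚ_[2]]) - 1)‖ ≤ 1 / 2} with hS
  have haq : ((2 : ℚ_[2])⁻¹) • ((1 : ℍ[ℚ_[2]]) + ⟨0,1,0,0⟩ + ⟨0,0,1,0⟩ + ⟨0,0,0,1⟩) = QGen.Aq := by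
    ext <;> simp [QGen.Aq] <;> change (_ + _ + _ + _ : ℚ_[2]) = 1 <;> norm_num
  have hbq : (1 : ℍ[ℚ_[2]]) + ⟨0,1,0,0⟩ = QGen.Bq := by
    ext <;> simp [QGen.Bq] <;> change (_ + _ : ℚ_[2]) = _ <;> norm_num
  have hAmem : QGen.Au ∈ Subgroup.closure S :=
    Subgroup.subset_closure (Or.inl haq.symm)
  have hBmem : QGen.Bu ∈ Subgroup.closure S :=
    Subgroup.subset_closure (Or.inr (Or.inl hbq.symm))
  rw [Subgroup.eq_top_iff']
  intro u
  -- normSq as a group hom on units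
  set φ : ℍ[ℚ_[2]]ˣ →* ℚ_[2]ˣ := Units.map (Quaternion.normSq.toMonoidHom) with hφ
  have hφval : ∀ v : ℍ[ℚ_[2]]ˣ, ((φ v : ℚ_[2]ˣ) : ℚ_[2]) = Quaternion.normSq (v : ℍ[ℚ_[2]]) :=
    fun v => rfl
  set n : ℤ := ((φ u : ℚ_[2]ˣ) : ℚ_[2]).valuation with hn
  have hune : ((φ u : ℚ_[2]ˣ) : ℚ_[2]) ≠ 0 := Units.ne_zero _
  have hval : ‖Quaternion.normSq (u : ℍ[ℚ_[2]])‖ = (2:ℝ)^(-n) := by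
    rw [← hφval u]
    exact_mod_cast Padic.norm_eq_zpow_neg_valuation hune
  set W : ℍ[ℚ_[2]]ˣ := u * QGen.Bu^(-n) with hW
  have hWval : ‖Quaternion.normSq (W : ℍ[ℚ_[2]])‖ = 1 := by
    have h1 : ((φ W : ℚ_[2]ˣ) : ℚ_[2]) = ((φ u : ℚ_[2]ˣ) : ℚ_[2]) * ((φ QGen.Bu : ℚ_[2]ˣ) : ℚ_[2])^(-n) := by
      rw [hW, map_mul, map_zpow, Units.val_mul]
      norm_cast
    have hφB : ((φ QGen.Bu : ℚ_[2]ˣ) : ℚ_[2]) = 2 := by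
      rw [hφval]; exact QGen.normSq_Bq
    rw [← hφval W, h1, hφB, norm_mul, norm_zpow, hφval u, hval, QGen.norm_two]
    rw [show ((1:ℝ)/2) = 2⁻¹ by norm_num, inv_zpow, ← zpow_neg, neg_neg, ← zpow_add₀ (by norm_num : (2:ℝ) ≠ 0)]
    norm_num
  have hWB : W * QGen.Bu^n = u := by rw [hW]; group
  rcases QGen.resid (W : ℍ[ℚ_[2]]) hWval with h | h | h
  · have hWmem : W ∈ Subgroup.closure S := Subgroup.subset_closure (Or.inr (Or.inr h))
    rw [← hWB]
    exact Subgroup.mul_mem _ hWmem (Subgroup.zpow_mem _ hBmem n)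
  · have hcoe : ((W * QGen.Au : ℍ[ℚ_[2]]ˣ) : ℍ[ℚ_[2]]) = (W : ℍ[ℚ_[2]]) * QGen.Aq := rfl
    have hWmem : W * QGen.Au ∈ Subgroup.closure S := by
      apply Subgroup.subset_closure
      refine Or.inr (Or.inr ?_)
      rw [hcoe]; exact h
    have hu : (W * QGen.Au) * QGen.Au⁻¹ * QGen.Bu^n = u := by rw [hW]; group
    rw [← hu]
    exact Subgroup.mul_mem _ (Subgroup.mul_mem _ hWmem (Subgroup.inv_mem _ hAmem))
      (Subgroup.zpow_mem _ hBmem n)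
  · have hcoe : ((W * QGen.Au * QGen.Au : ℍ[ℚ_[2]]ˣ) : ℍ[ℚ_[2]])
        = (W : ℍ[ℚ_[2]]) * QGen.Aq * QGen.Aq := rfl
    have hWmem : W * QGen.Au * QGen.Au ∈ Subgroup.closure S := by
      apply Subgroup.subset_closure
      refine Or.inr (Or.inr ?_)
      rw [hcoe]; exact h
    have hu : (W * QGen.Au * QGen.Au) * QGen.Au⁻¹ * QGen.Au⁻¹ * QGen.Bu^n = u := by rw [hW]; group
    rw [← hu]
    exact Subgroup.mul_mem _ (Subgroup.mul_mem _ (Subgroup.mul_mem _ hWmem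
      (Subgroup.inv_mem _ hAmem)) (Subgroup.inv_mem _ hAmem)) (Subgroup.zpow_mem _ hBmem n)
end

section
/- Let G be a group generated by two elements a and b satisfying a³ = 1 and b*a*b⁻¹ = a⁻¹. Let V be a nonzero finite-dimensional complex vector space and ρ : G →* GL(V) a representation which is irreducible (the only ρ-invariant subspaces of V are 0 and V). Then either ρ(a) is the identity and dim_ℂ V = 1, or ρ(a) is not the identity and dim_ℂ V = 2. -/
open Submodule

/-- If a submodule is stable under the images of a generating set (and their inverses),
it is stable under the whole representation. -/
private lemma aux_invariant {G : Type*} [Group G] {V : Type*} [AddCommGroup V] [Module ℂ V]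
    (ρ : G →* LinearMap.GeneralLinearGroup ℂ V) (S : Set G)
    (hgen : Subgroup.closure S = ⊤) (W : Submodule ℂ V)
    (hS : ∀ g ∈ S, (∀ w ∈ W, (ρ g : V →ₗ[ℂ] V) w ∈ W) ∧
          (∀ w ∈ W, (ρ g⁻¹ : V →ₗ[ℂ] V) w ∈ W)) :
    ∀ g : G, ∀ w ∈ W, (ρ g : V →ₗ[ℂ] V) w ∈ W := by
  have main : ∀ g : G, (∀ w ∈ W, (ρ g : V →ₗ[ℂ] V) w ∈ W) ∧
      (∀ w ∈ W, (ρ g⁻¹ : V →ₗ[ℂ] V) w ∈ W) := by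
    intro g
    have hg : g ∈ Subgroup.closure S := by rw [hgen]; trivial
    induction hg using Subgroup.closure_induction with
    | mem x hx => exact hS x hx
    | one => constructor <;> intro w hw <;> simpa using hw
    | mul x y hx hy ihx ihy =>
      constructor
      · intro w hw
        have : (ρ (x * y) : V →ₗ[ℂ] V) w = (ρ x : V →ₗ[ℂ] V) ((ρ y : V →ₗ[ℂ] V) w) := by
          simp [map_mul]
        rw [this]; exact ihx.1 _ (ihy.1 w hw)
      · intro w hw
        have : (ρ (x * y)⁻¹ : V →ₗ[ℂ] V) w = (ρ y⁻¹ : V →ₗ[ℂ] V) ((ρ x⁻¹ : V →ₗ[ℂ] V) w) := by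
          rw [mul_inv_rev]; simp [map_mul]
        rw [this]; exact ihy.2 _ (ihx.2 w hw)
    | inv x hx ih => exact ⟨ih.2, by simpa using ih.1⟩
  exact fun g => (main g).1

/-- Let `G` be a group generated by two elements `a` and `b` satisfying `a³ = 1` and
`b*a*b⁻¹ = a⁻¹`. Let `V` be a nonzero finite-dimensional complex vector space and
`ρ : G →* GL(V)` an irreducible representation (the only `ρ`-invariant subspaces of `V`
are `0` and `V`). Then either `ρ(a)` is the identity and `dim_ℂ V = 1`, or `ρ(a)` is
not the identity and `dim_ℂ V = 2`. -/
theorem irreducible_rep_dim_one_or_two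
    {G : Type*} [Group G] (a b : G)
    (hgen : Subgroup.closure ({a, b} : Set G) = ⊤)
    (ha : a ^ 3 = 1) (hb : b * a * b⁻¹ = a⁻¹)
    {V : Type*} [AddCommGroup V] [Module ℂ V] [FiniteDimensional ℂ V] [Nontrivial V]
    (ρ : G →* LinearMap.GeneralLinearGroup ℂ V)
    (hirr : ∀ W : Submodule ℂ V,
      (∀ g : G, ∀ v ∈ W, (ρ g : V →ₗ[ℂ] V) v ∈ W) → W = ⊥ ∨ W = ⊤) :
    (ρ a = 1 ∧ Module.finrank ℂ V = 1) ∨ (ρ a ≠ 1 ∧ Module.finrank ℂ V = 2) := by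
  -- group identities
  have hb2 : b * a⁻¹ * b⁻¹ = a := by
    calc b * a⁻¹ * b⁻¹ = (b * a * b⁻¹)⁻¹ := by group
    _ = (a⁻¹)⁻¹ := by rw [hb]
    _ = a := by group
  have h1 : a * b = b * a⁻¹ := by
    calc a * b = (b * a⁻¹ * b⁻¹) * b := by rw [hb2]
    _ = b * a⁻¹ := by group
  have h3 : a * b⁻¹ = b⁻¹ * a⁻¹ := by
    calc a * b⁻¹ = b⁻¹ * (b * a * b⁻¹) := by group
    _ = b⁻¹ * a⁻¹ := by rw [hb]
  have h4 : a⁻¹ * b = b * a := by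
    calc a⁻¹ * b = (b * a * b⁻¹) * b := by rw [hb]
    _ = b * a := by group
  have h5 : a⁻¹ * b⁻¹ = b⁻¹ * a := by
    calc a⁻¹ * b⁻¹ = b⁻¹ * (b * a⁻¹ * b⁻¹) := by group
    _ = b⁻¹ * a := by rw [hb2]
  have hc : a * (b * b) = (b * b) * a := by
    calc a * (b * b) = (a * b) * b := by group
    _ = (b * a⁻¹) * b := by rw [h1]
    _ = b * (a⁻¹ * b) := by group
    _ = b * (b * a) := by rw [h4]
    _ = (b * b) * a := by group
  -- b*b is central
  have hcomm : ∀ g : G, g * (b * b) = (b * b) * g := by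
    intro g
    have hg : g ∈ Subgroup.closure ({a, b} : Set G) := by rw [hgen]; trivial
    induction hg using Subgroup.closure_induction with
    | mem x hx =>
      rcases hx with rfl | rfl
      · exact hc
      · group
    | one => group
    | mul x y hx hy ihx ihy =>
      calc x * y * (b * b) = x * (y * (b * b)) := by group
      _ = x * ((b * b) * y) := by rw [ihy]
      _ = (x * (b * b)) * y := by group
      _ = ((b * b) * x) * y := by rw [ihx]
      _ = (b * b) * (x * y) := by group
    | inv x hx ih =>
      calc x⁻¹ * (b * b) = x⁻¹ * ((b * b) * x) * x⁻¹ := by group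
      _ = x⁻¹ * (x * (b * b)) * x⁻¹ := by rw [← ih]
      _ = (b * b) * x⁻¹ := by group
  -- T = ρ(b*b) commutes with every ρ g
  set T : V →ₗ[ℂ] V := (ρ (b * b) : V →ₗ[ℂ] V) with hT_def
  have hTcomm : ∀ (g : G) (v : V), T ((ρ g : V →ₗ[ℂ] V) v) = (ρ g : V →ₗ[ℂ] V) (T v) := by
    intro g v
    have h' : (ρ ((b * b) * g) : V →ₗ[ℂ] V) v = (ρ (g * (b * b)) : V →ₗ[ℂ] V) v := by
      rw [hcomm g]
    simpa [hT_def, map_mul] using h'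
  -- Schur: T is scalar
  obtain ⟨μ, hμ⟩ := Module.End.exists_eigenvalue (T : Module.End ℂ V)
  have hE : Module.End.eigenspace (T : Module.End ℂ V) μ = ⊤ := by
    refine (hirr _ ?_).resolve_left hμ
    intro g w hw
    rw [Module.End.mem_eigenspace_iff] at hw ⊢
    calc T ((ρ g : V →ₗ[ℂ] V) w) = (ρ g : V →ₗ[ℂ] V) (T w) := hTcomm g w
    _ = (ρ g : V →ₗ[ℂ] V) (μ • w) := by rw [hw]
    _ = μ • (ρ g : V →ₗ[ℂ] V) w := map_smul _ _ _
  have hT : ∀ v : V, T v = μ • v := by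
    intro v
    exact Module.End.mem_eigenspace_iff.mp (hE ▸ Submodule.mem_top)
  have hinv_cancel : ∀ (x : G) (v : V), (ρ x⁻¹ : V →ₗ[ℂ] V) ((ρ x : V →ₗ[ℂ] V) v) = v := by
    intro x v
    simp [← Module.End.mul_apply, ← Units.val_mul]
  have hμ0 : μ ≠ 0 := by
    intro h0
    obtain ⟨v, hv⟩ := exists_ne (0 : V)
    apply hv
    have h1' : T v = 0 := by rw [hT, h0, zero_smul]
    have := hinv_cancel (b * b) v
    rw [← hT_def] at this
    rw [h1'] at this
    simpa using this.symm
  by_cases hA1 : ρ a = 1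
  · -- case ρ a = 1 : dimension 1
    left
    refine ⟨hA1, ?_⟩
    obtain ⟨β, hβ⟩ := Module.End.exists_eigenvalue ((ρ b : V →ₗ[ℂ] V) : Module.End ℂ V)
    obtain ⟨u, hu⟩ := hβ.exists_hasEigenvector
    have hu0 : u ≠ 0 := hu.right
    have hBu : (ρ b : V →ₗ[ℂ] V) u = β • u := hu.apply_eq_smul
    have hβ0 : β ≠ 0 := by
      intro h0
      apply hu0
      have := hinv_cancel b u
      rw [hBu, h0, zero_smul, map_zero] at this
      exact this.symm
    have hBinvu : (ρ b⁻¹ : V →ₗ[ℂ] V) u = β⁻¹ • u := by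
      have := hinv_cancel b u
      rw [hBu, map_smul] at this
      calc (ρ b⁻¹ : V →ₗ[ℂ] V) u = β⁻¹ • (β • (ρ b⁻¹ : V →ₗ[ℂ] V) u) := by
            rw [smul_smul, inv_mul_cancel₀ hβ0, one_smul]
      _ = β⁻¹ • u := by rw [this]
    set W : Submodule ℂ V := span ℂ {u} with hW_def
    have huW : u ∈ W := subset_span rfl
    have key : ∀ (f : V →ₗ[ℂ] V), f u ∈ W → ∀ w ∈ W, f w ∈ W := by
      intro f hf w hw
      rw [hW_def, mem_span_singleton] at hw
      obtain ⟨c, rfl⟩ := hw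
      rw [map_smul]
      exact smul_mem _ c hf
    have hAu : (ρ a : V →ₗ[ℂ] V) u = u := by rw [hA1]; simp
    have hAinvu : (ρ a⁻¹ : V →ₗ[ℂ] V) u = u := by rw [map_inv, hA1]; simp
    have hga : (∀ w ∈ W, (ρ a : V →ₗ[ℂ] V) w ∈ W) ∧
        (∀ w ∈ W, (ρ a⁻¹ : V →ₗ[ℂ] V) w ∈ W) :=
      ⟨key _ (by rw [hAu]; exact huW), key _ (by rw [hAinvu]; exact huW)⟩
    have hgb : (∀ w ∈ W, (ρ b : V →ₗ[ℂ] V) w ∈ W) ∧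
        (∀ w ∈ W, (ρ b⁻¹ : V →ₗ[ℂ] V) w ∈ W) :=
      ⟨key _ (by rw [hBu]; exact smul_mem _ _ huW),
       key _ (by rw [hBinvu]; exact smul_mem _ _ huW)⟩
    have hWinv : ∀ g : G, ∀ w ∈ W, (ρ g : V →ₗ[ℂ] V) w ∈ W := by
      apply aux_invariant ρ _ hgen
      intro g hg
      rcases hg with rfl | rfl
      exacts [hga, hgb]
    have hWtop : W = ⊤ := by
      refine (hirr W hWinv).resolve_left ?_
      intro h
      exact hu0 (by simpa [h] using huW)
    rw [← finrank_top ℂ V, ← hWtop, hW_def]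
    exact finrank_span_singleton hu0
  · -- case ρ a ≠ 1 : dimension 2
    right
    refine ⟨hA1, ?_⟩
    -- ker (ρ a - 1) = ⊥
    set U : Submodule ℂ V := Module.End.eigenspace ((ρ a : V →ₗ[ℂ] V) : Module.End ℂ V) 1
      with hU_def
    have hUmem : ∀ w : V, w ∈ U ↔ (ρ a : V →ₗ[ℂ] V) w = w := by
      intro w
      rw [hU_def, Module.End.mem_eigenspace_iff, one_smul]
    have hUbot : U = ⊥ := by
      have hAinv : ∀ w ∈ U, (ρ a⁻¹ : V →ₗ[ℂ] V) w = w := by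
        intro w hw
        rw [hUmem] at hw
        have := hinv_cancel a w
        rw [hw] at this; exact this
      have hga : (∀ w ∈ U, (ρ a : V →ₗ[ℂ] V) w ∈ U) ∧
          (∀ w ∈ U, (ρ a⁻¹ : V →ₗ[ℂ] V) w ∈ U) := by
        constructor
        · intro w hw
          rw [hUmem] at hw ⊢
          rw [hw, hw]
        · intro w hw
          have h' := hAinv w hw
          rw [hUmem, h']
          exact (hUmem w).mp hw
      have hgb : (∀ w ∈ U, (ρ b : V →ₗ[ℂ] V) w ∈ U) ∧
          (∀ w ∈ U, (ρ b⁻¹ : V →ₗ[ℂ] V) w ∈ U) := by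
        constructor
        · intro w hw
          rw [hUmem]
          have e1 : (ρ (a * b) : V →ₗ[ℂ] V) w = (ρ (b * a⁻¹) : V →ₗ[ℂ] V) w := by rw [h1]
          have e2 : (ρ a : V →ₗ[ℂ] V) ((ρ b : V →ₗ[ℂ] V) w)
              = (ρ b : V →ₗ[ℂ] V) ((ρ a⁻¹ : V →ₗ[ℂ] V) w) := by
            simpa [map_mul] using e1
          rw [e2, hAinv w hw]
        · intro w hw
          rw [hUmem]
          have e1 : (ρ (a * b⁻¹) : V →ₗ[ℂ] V) w = (ρ (b⁻¹ * a⁻¹) : V →ₗ[ℂ] V) w := by rw [h3]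
          have e2 : (ρ a : V →ₗ[ℂ] V) ((ρ b⁻¹ : V →ₗ[ℂ] V) w)
              = (ρ b⁻¹ : V →ₗ[ℂ] V) ((ρ a⁻¹ : V →ₗ[ℂ] V) w) := by
            simpa [map_mul] using e1
          rw [e2, hAinv w hw]
      have hUinv : ∀ g : G, ∀ w ∈ U, (ρ g : V →ₗ[ℂ] V) w ∈ U := by
        apply aux_invariant ρ _ hgen
        intro g hg
        rcases hg with rfl | rfl
        exacts [hga, hgb]
      refine (hirr U hUinv).resolve_right ?_
      intro htop
      apply hA1
      ext v
      have : v ∈ U := htop ▸ Submodule.mem_top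
      rw [hUmem] at this
      simpa using this
    -- eigenvector of ρ a
    obtain ⟨lam, hlam⟩ := Module.End.exists_eigenvalue ((ρ a : V →ₗ[ℂ] V) : Module.End ℂ V)
    obtain ⟨v, hv⟩ := hlam.exists_hasEigenvector
    have hv0 : v ≠ 0 := hv.right
    have hAv : (ρ a : V →ₗ[ℂ] V) v = lam • v := hv.apply_eq_smul
    have hlam1 : lam ≠ 1 := by
      intro h
      apply hv0
      have : v ∈ U := by rw [hUmem, hAv, h, one_smul]
      simpa [hUbot] using this
    have hA3 : ∀ w : V, (ρ a : V →ₗ[ℂ] V) ((ρ a : V →ₗ[ℂ] V) ((ρ a : V →ₗ[ℂ] V) w)) = w := by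
      intro w
      have e : ρ (a * (a * a)) = 1 := by
        rw [show a * (a * a) = a ^ 3 by rw [pow_succ, pow_succ, pow_one, mul_assoc], ha, map_one]
      have : (ρ (a * (a * a)) : V →ₗ[ℂ] V) w = w := by rw [e]; simp
      simpa [map_mul] using this
    have hlam3 : lam ^ 3 = 1 := by
      have e := hA3 v
      rw [hAv, map_smul, hAv, map_smul, map_smul, hAv] at e
      have e2 : (lam ^ 3 - 1) • v = 0 := by
        rw [sub_smul, one_smul, sub_eq_zero]
        calc lam ^ 3 • v = lam • lam • lam • v := by rw [smul_smul, smul_smul]; ring_nf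
        _ = v := e
      rcases smul_eq_zero.mp e2 with h | h
      · exact sub_eq_zero.mp h
      · exact absurd h hv0
    have hlam0 : lam ≠ 0 := by
      intro h
      rw [h] at hlam3
      simp at hlam3
    have hAinvv : (ρ a⁻¹ : V →ₗ[ℂ] V) v = lam⁻¹ • v := by
      have := hinv_cancel a v
      rw [hAv, map_smul] at this
      calc (ρ a⁻¹ : V →ₗ[ℂ] V) v = lam⁻¹ • (lam • (ρ a⁻¹ : V →ₗ[ℂ] V) v) := by
            rw [smul_smul, inv_mul_cancel₀ hlam0, one_smul]
      _ = lam⁻¹ • v := by rw [this]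
    have hlamne : lam⁻¹ ≠ lam := by
      intro h
      have h2 : lam * lam = 1 := by
        calc lam * lam = lam * lam⁻¹ := by rw [h]
        _ = 1 := mul_inv_cancel₀ hlam0
      have h3 : lam ^ 3 = lam := by
        rw [show lam ^ 3 = lam * (lam * lam) by ring, h2, mul_one]
      exact hlam1 (h3.symm.trans hlam3)
    set Bv : V := (ρ b : V →ₗ[ℂ] V) v with hBv_def
    have hBv0 : Bv ≠ 0 := by
      intro h
      apply hv0
      have := hinv_cancel b v
      rw [← hBv_def, h, map_zero] at this
      exact this.symm
    have hABv : (ρ a : V →ₗ[ℂ] V) Bv = lam⁻¹ • Bv := by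
      have e1 : (ρ (a * b) : V →ₗ[ℂ] V) v = (ρ (b * a⁻¹) : V →ₗ[ℂ] V) v := by rw [h1]
      have e2 : (ρ a : V →ₗ[ℂ] V) ((ρ b : V →ₗ[ℂ] V) v)
          = (ρ b : V →ₗ[ℂ] V) ((ρ a⁻¹ : V →ₗ[ℂ] V) v) := by simpa [map_mul] using e1
      rw [hBv_def, e2, hAinvv, map_smul]
    have hBBv : (ρ b : V →ₗ[ℂ] V) Bv = μ • v := by
      have : (ρ (b * b) : V →ₗ[ℂ] V) v = μ • v := hT v
      simpa [map_mul, hBv_def] using this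
    -- the span of v and Bv
    set W : Submodule ℂ V := span ℂ {v, Bv} with hW_def
    have hvW : v ∈ W := subset_span (Set.mem_insert _ _)
    have hBvW : Bv ∈ W := subset_span (Set.mem_insert_of_mem _ rfl)
    have key : ∀ (f : V →ₗ[ℂ] V), f v ∈ W → f Bv ∈ W → ∀ w ∈ W, f w ∈ W := by
      intro f hfv hfBv w hw
      induction hw using Submodule.span_induction with
      | mem x hx => rcases hx with rfl | rfl; exacts [hfv, hfBv]
      | zero => rw [map_zero]; exact W.zero_mem
      | add x y _ _ ihx ihy => rw [map_add]; exact W.add_mem ihx ihy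
      | smul c x _ ihx => rw [map_smul]; exact W.smul_mem c ihx
    have hAinvBv : (ρ a⁻¹ : V →ₗ[ℂ] V) Bv = lam • Bv := by
      have e1 : (ρ (a⁻¹ * b) : V →ₗ[ℂ] V) v = (ρ (b * a) : V →ₗ[ℂ] V) v := by rw [h4]
      have e2 : (ρ a⁻¹ : V →ₗ[ℂ] V) ((ρ b : V →ₗ[ℂ] V) v)
          = (ρ b : V →ₗ[ℂ] V) ((ρ a : V →ₗ[ℂ] V) v) := by simpa [map_mul] using e1
      rw [hBv_def, e2, hAv, map_smul]
    have hBinvv : (ρ b⁻¹ : V →ₗ[ℂ] V) v = μ⁻¹ • Bv := by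
      have e : (ρ b : V →ₗ[ℂ] V) (μ⁻¹ • Bv) = v := by
        rw [map_smul, hBBv, smul_smul, inv_mul_cancel₀ hμ0, one_smul]
      have := hinv_cancel b (μ⁻¹ • Bv)
      rw [e] at this
      exact this
    have hBinvBv : (ρ b⁻¹ : V →ₗ[ℂ] V) Bv = v := by
      rw [hBv_def]; exact hinv_cancel b v
    have hga : (∀ w ∈ W, (ρ a : V →ₗ[ℂ] V) w ∈ W) ∧
        (∀ w ∈ W, (ρ a⁻¹ : V →ₗ[ℂ] V) w ∈ W) := by
      constructor
      · exact key _ (by rw [hAv]; exact W.smul_mem _ hvW)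
          (by rw [hABv]; exact W.smul_mem _ hBvW)
      · exact key _ (by rw [hAinvv]; exact W.smul_mem _ hvW)
          (by rw [hAinvBv]; exact W.smul_mem _ hBvW)
    have hgb : (∀ w ∈ W, (ρ b : V →ₗ[ℂ] V) w ∈ W) ∧
        (∀ w ∈ W, (ρ b⁻¹ : V →ₗ[ℂ] V) w ∈ W) := by
      constructor
      · exact key _ hBvW (by rw [hBBv]; exact W.smul_mem _ hvW)
      · exact key _ (by rw [hBinvv]; exact W.smul_mem _ hBvW)
          (by rw [hBinvBv]; exact hvW)
    have hWinv : ∀ g : G, ∀ w ∈ W, (ρ g : V →ₗ[ℂ] V) w ∈ W := by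
      apply aux_invariant ρ _ hgen
      intro g hg
      rcases hg with rfl | rfl
      exacts [hga, hgb]
    have hWtop : W = ⊤ := by
      refine (hirr W hWinv).resolve_left ?_
      intro h
      exact hv0 (by simpa [h] using hvW)
    -- v, Bv linearly independent
    have hli : LinearIndependent ℂ ![v, Bv] := by
      rw [LinearIndependent.pair_iff]
      intro s t hst
      have happ : s • (lam • v) + t • (lam⁻¹ • Bv) = 0 := by
        have := congrArg (ρ a : V →ₗ[ℂ] V) hst
        rw [map_add, map_smul, map_smul, hAv, hABv, map_zero] at this
        exact this
      have h2 : s • (lam • v) + t • (lam • Bv) = 0 := by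
        have := congrArg (lam • ·) hst
        simpa [smul_add, smul_smul, mul_comm] using this
      have hdiff : (t * (lam⁻¹ - lam)) • Bv = 0 := by
        have := sub_eq_zero.mpr (happ.trans h2.symm)
        rw [show s • (lam • v) + t • (lam⁻¹ • Bv) - (s • (lam • v) + t • (lam • Bv))
            = (t * (lam⁻¹ - lam)) • Bv by rw [mul_smul]; rw [sub_smul]; module] at this
        exact this
      have ht : t = 0 := by
        rcases smul_eq_zero.mp hdiff with h | h
        · rcases mul_eq_zero.mp h with h | h
          · exact h
          · exact absurd (sub_eq_zero.mp h) hlamne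
        · exact absurd h hBv0
      have hs : s = 0 := by
        rw [ht, zero_smul, add_zero] at hst
        rcases smul_eq_zero.mp hst with h | h
        · exact h
        · exact absurd h hv0
      exact ⟨hs, ht⟩
    have hrange : Set.range ![v, Bv] = {v, Bv} := by
      simp only [Matrix.range_cons, Matrix.range_empty, Set.union_empty, Set.union_singleton]
      exact Set.pair_comm _ _
    have hspan : ⊤ ≤ span ℂ (Set.range ![v, Bv]) := by
      rw [hrange, ← hW_def, hWtop]
    let bas : Module.Basis (Fin 2) ℂ V := Module.Basis.mk hli hspan
    rw [Module.finrank_eq_card_basis bas]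
    simp
end

section
/- Let p be an odd prime and let G be the subgroup of GL₂(ℚ_p) consisting of matrices (a b; c d) with ‖a‖ ≤ 1, ‖b‖ ≤ 1, ‖c‖ ≤ 1/p, ‖d − 1‖ ≤ 1/p and ‖a*d − b*c‖ = 1 (i.e. matrices in GL₂(ℤ_p) congruent to (* *; 0 1) mod p). Let η = (p 0; 0 1) ∈ GL₂(ℚ_p). Then the double coset G·η·G = {g₁*η*g₂ : g₁, g₂ ∈ G} is the union over i = 0, …, p−1 of the right cosets G·(p 0; p·i 1), and these p right cosets are pairwise disjoint. -/
variable {p : ℕ} [Fact p.Prime]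

namespace UpAux

/-- the Iwahori-type condition -/
def InS (p : ℕ) [Fact p.Prime] (m : Matrix (Fin 2) (Fin 2) ℚ_[p]) : Prop :=
  ‖m 0 0‖ ≤ 1 ∧ ‖m 0 1‖ ≤ 1 ∧ ‖m 1 0‖ ≤ 1 / p ∧ ‖m 1 1 - 1‖ ≤ 1 / p ∧
    ‖m 0 0 * m 1 1 - m 0 1 * m 1 0‖ = 1

lemma normp : ‖(p : ℚ_[p])‖ = 1 / (p : ℝ) := by
  rw [Padic.norm_p, one_div]

lemma p_ne_zero : ((p : ℚ_[p])) ≠ 0 := by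
  exact_mod_cast Nat.cast_ne_zero.mpr (Fact.out : p.Prime).ne_zero

lemma inv_p_lt_one : (1 : ℝ) / p < 1 := by
  have h2 : (2 : ℝ) ≤ p := by exact_mod_cast (Fact.out : p.Prime).two_le
  rw [div_lt_one (by linarith)]; linarith

lemma norm_nat_le_one (n : ℕ) : ‖(n : ℚ_[p])‖ ≤ 1 := by
  have := Padic.norm_int_le_one (p := p) (n : ℤ)
  simpa using this

lemma mul_ent (m n : Matrix (Fin 2) (Fin 2) ℚ_[p]) (i j : Fin 2) :
    (m * n) i j = m i 0 * n 0 j + m i 1 * n 1 j := by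
  simp [Matrix.mul_apply, Fin.sum_univ_two]

lemma exists_residue (z : ℚ_[p]) (hz : ‖z‖ ≤ 1) :
    ∃ i : ℕ, i < p ∧ ‖z - (i : ℚ_[p])‖ ≤ 1 / p := by
  set x : ℤ_[p] := ⟨z, hz⟩ with hx
  refine ⟨x.zmodRepr, PadicInt.zmodRepr_lt_p x, ?_⟩
  have hmem : x - (x.zmodRepr : ℤ_[p]) ∈ Ideal.span {((p : ℤ_[p]))} := by
    rw [← PadicInt.maximalIdeal_eq_span_p]; exact PadicInt.sub_zmodRepr_mem x
  have := (PadicInt.norm_le_pow_iff_mem_span_pow (x - (x.zmodRepr : ℤ_[p])) 1).2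
    (by simpa using hmem)
  have hco : ((x - (x.zmodRepr : ℤ_[p]) : ℤ_[p]) : ℚ_[p]) = z - (x.zmodRepr : ℚ_[p]) := by
    rw [PadicInt.coe_sub]; simp [hx]
  rw [PadicInt.norm_def, hco] at this
  calc ‖z - (x.zmodRepr : ℚ_[p])‖ ≤ (p : ℝ) ^ (-1 : ℤ) := this
    _ = 1 / p := by rw [zpow_neg_one, one_div]

/-- S is closed under multiplication. -/
lemma InS.mul {m n : Matrix (Fin 2) (Fin 2) ℚ_[p]} (hm : InS p m) (hn : InS p n) :
    InS p (m * n) := by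
  obtain ⟨ha, hb, hc, hd, hdet⟩ := hm
  obtain ⟨ha', hb', hc', hd', hdet'⟩ := hn
  have hn11 : ‖n 1 1‖ ≤ 1 := by
    have := Padic.nonarchimedean (n 1 1 - 1) 1
    simpa using this.trans (max_le (hd'.trans (le_of_lt inv_p_lt_one)) (by simp))
  have hplt := (inv_p_lt_one (p := p)).le
  refine ⟨?_, ?_, ?_, ?_, ?_⟩
  have hc'1 : ‖n 1 0‖ ≤ 1 := hc'.trans hplt
  · rw [mul_ent]
    refine (Padic.nonarchimedean _ _).trans (max_le ?_ ?_) <;>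
      · rw [norm_mul]
        exact mul_le_one₀ (by assumption) (norm_nonneg _) (by assumption)
  · rw [mul_ent]
    refine (Padic.nonarchimedean _ _).trans (max_le ?_ ?_) <;>
      · rw [norm_mul]
        exact mul_le_one₀ (by assumption) (norm_nonneg _) (by assumption)
  · rw [mul_ent]
    refine (Padic.nonarchimedean _ _).trans (max_le ?_ ?_)
    · rw [norm_mul]
      calc ‖m 1 0‖ * ‖n 0 0‖ ≤ (1/p) * 1 := by
            exact mul_le_mul hc ha' (norm_nonneg _) (by positivity)
        _ = 1/p := by ring
    · rw [norm_mul]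
      calc ‖m 1 1‖ * ‖n 1 0‖ ≤ 1 * (1/p) := by
            refine mul_le_mul ?_ hc' (norm_nonneg _) zero_le_one
            have := Padic.nonarchimedean (m 1 1 - 1) 1
            simpa using this.trans (max_le (hd.trans hplt) (by simp))
        _ = 1/p := by ring
  · rw [mul_ent]
    have heq : m 1 0 * n 0 1 + m 1 1 * n 1 1 - 1
        = m 1 0 * n 0 1 + ((m 1 1 - 1) * n 1 1 + (n 1 1 - 1)) := by ring
    rw [heq]
    refine (Padic.nonarchimedean _ _).trans (max_le ?_ ((Padic.nonarchimedean _ _).trans (max_le ?_ hd')))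
    · rw [norm_mul]
      calc ‖m 1 0‖ * ‖n 0 1‖ ≤ (1/p) * 1 :=
            mul_le_mul hc hb' (norm_nonneg _) (by positivity)
        _ = 1/p := by ring
    · rw [norm_mul]
      calc ‖m 1 1 - 1‖ * ‖n 1 1‖ ≤ (1/p) * 1 :=
            mul_le_mul hd hn11 (norm_nonneg _) (by positivity)
        _ = 1/p := by ring
  · have h1 : (m * n) 0 0 * (m * n) 1 1 - (m * n) 0 1 * (m * n) 1 0 = (m * n).det := by
      rw [Matrix.det_fin_two]
    rw [h1, Matrix.det_mul, norm_mul, Matrix.det_fin_two, Matrix.det_fin_two, hdet, hdet',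
      one_mul]

end UpAux

open UpAux

/-- Coset decomposition for the Hecke operator `U_p`: for `p` an odd prime, with
`G ⊆ GL₂(ℚ_p)` the set of matrices in `GL₂(ℤ_p)` congruent to `(* *; 0 1) mod p` and
`η = (p 0; 0 1)`, the double coset `G·η·G` is the disjoint union of the right cosets
`G·(p 0; p·i 1)` for `i = 0, …, p−1`. -/
theorem Up_double_coset_decomposition (p : ℕ) [Fact p.Prime] (hp : Odd p) :
    let S : Set (Matrix (Fin 2) (Fin 2) ℚ_[p]) :=
      {m | ‖m 0 0‖ ≤ 1 ∧ ‖m 0 1‖ ≤ 1 ∧ ‖m 1 0‖ ≤ 1 / p ∧ ‖m 1 1 - 1‖ ≤ 1 / p ∧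
        ‖m 0 0 * m 1 1 - m 0 1 * m 1 0‖ = 1}
    let η : Matrix (Fin 2) (Fin 2) ℚ_[p] := !![(p : ℚ_[p]), 0; 0, 1]
    let C : ℕ → Set (Matrix (Fin 2) (Fin 2) ℚ_[p]) :=
      fun i => {x | ∃ g ∈ S, x = g * !![(p : ℚ_[p]), 0; (p : ℚ_[p]) * (i : ℚ_[p]), 1]}
    ({x | ∃ g₁ ∈ S, ∃ g₂ ∈ S, x = g₁ * η * g₂} = ⋃ i ∈ Finset.range p, C i) ∧
    (∀ i ∈ Finset.range p, ∀ j ∈ Finset.range p, i ≠ j → Disjoint (C i) (C j)) := by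
  intro S η C
  have hSdef : ∀ m : Matrix (Fin 2) (Fin 2) ℚ_[p], m ∈ S ↔ InS p m := fun m => Iff.rfl
  have hη : η = !![(p : ℚ_[p]), 0; 0, 1] := rfl
  have hp0 : ((p : ℚ_[p])) ≠ 0 := p_ne_zero
  have hplt : (1 : ℝ) / p < 1 := inv_p_lt_one
  constructor
  · ext x
    simp only [Set.mem_setOf_eq, Set.mem_iUnion, Finset.mem_range, C]
    constructor
    · rintro ⟨g₁, hg₁, g₂, hg₂, rfl⟩
      rw [hSdef] at hg₁ hg₂
      obtain ⟨ha, hb, hc, hd, hdet⟩ := hg₂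
      -- choose the residue i of (g₂ 1 0) / p
      have hz : ‖g₂ 1 0 * (p : ℚ_[p])⁻¹‖ ≤ 1 := by
        rw [norm_mul, norm_inv, normp (p := p)]
        have hppos : (0 : ℝ) < p := by exact_mod_cast (Fact.out : p.Prime).pos
        rw [one_div, inv_inv]
        calc ‖g₂ 1 0‖ * (p : ℝ) ≤ (1 / p) * p :=
              mul_le_mul_of_nonneg_right hc hppos.le
          _ = 1 := by field_simp
      obtain ⟨i, hip, hi⟩ := exists_residue _ hz
      set inv : Matrix (Fin 2) (Fin 2) ℚ_[p] := !![(p : ℚ_[p])⁻¹, 0; -(i : ℚ_[p]), 1] with hinv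
      set r : Matrix (Fin 2) (Fin 2) ℚ_[p] := !![(p : ℚ_[p]), 0; (p : ℚ_[p]) * (i : ℚ_[p]), 1]
        with hr
      have hinvr : inv * r = 1 := by
        ext a b
        fin_cases a <;> fin_cases b <;>
          simp [hinv, hr, mul_ent, Matrix.one_apply, inv_mul_cancel₀ hp0] <;> ring
      have e00 : (η * g₂ * inv) 0 0 = g₂ 0 0 + (p : ℚ_[p]) * g₂ 0 1 * (-(i : ℚ_[p])) := by
        rw [mul_ent, mul_ent, mul_ent, hη, hinv]
        simp
        field_simp
      have e01 : (η * g₂ * inv) 0 1 = (p : ℚ_[p]) * g₂ 0 1 := by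
        rw [mul_ent, mul_ent, mul_ent, hη, hinv]
        simp
      have e10 : (η * g₂ * inv) 1 0 = g₂ 1 0 * (p : ℚ_[p])⁻¹ + g₂ 1 1 * (-(i : ℚ_[p])) := by
        rw [mul_ent, mul_ent, mul_ent, hη, hinv]
        simp
      have e11 : (η * g₂ * inv) 1 1 = g₂ 1 1 := by
        rw [mul_ent, mul_ent, mul_ent, hη, hinv]
        simp
      have hw : InS p (η * g₂ * inv) := by
        refine ⟨?_, ?_, ?_, ?_, ?_⟩
        · rw [e00]
          refine (Padic.nonarchimedean _ _).trans (max_le ha ?_)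
          rw [norm_mul, norm_mul, norm_neg, normp (p := p)]
          calc 1 / (p:ℝ) * ‖g₂ 0 1‖ * ‖(i : ℚ_[p])‖ ≤ 1 / p * 1 * 1 := by
                refine mul_le_mul (mul_le_mul_of_nonneg_left hb (by positivity))
                  (norm_nat_le_one i) (norm_nonneg _) (by positivity)
            _ ≤ 1 := by rw [mul_one, mul_one]; exact hplt.le
        · rw [e01, norm_mul, normp (p := p)]
          calc 1 / (p:ℝ) * ‖g₂ 0 1‖ ≤ 1 / p * 1 := mul_le_mul_of_nonneg_left hb (by positivity)
            _ ≤ 1 := by rw [mul_one]; exact hplt.le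
        · rw [e10]
          have h1 : g₂ 1 0 * (p : ℚ_[p])⁻¹ + g₂ 1 1 * (-(i : ℚ_[p]))
              = (g₂ 1 0 * (p : ℚ_[p])⁻¹ - (i : ℚ_[p])) + (1 - g₂ 1 1) * (i : ℚ_[p]) := by ring
          rw [h1]
          refine (Padic.nonarchimedean _ _).trans (max_le hi ?_)
          rw [norm_mul]
          calc ‖1 - g₂ 1 1‖ * ‖(i : ℚ_[p])‖ ≤ (1/p) * 1 := by
                refine mul_le_mul ?_ (norm_nat_le_one i) (norm_nonneg _) (by positivity)
                rw [show (1 : ℚ_[p]) - g₂ 1 1 = -(g₂ 1 1 - 1) by ring, norm_neg]; exact hd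
            _ = 1/p := by ring
        · rw [e11]; exact hd
        · have h1 : ∀ m : Matrix (Fin 2) (Fin 2) ℚ_[p],
              m 0 0 * m 1 1 - m 0 1 * m 1 0 = m.det := fun m => (Matrix.det_fin_two m).symm
          have hηdet : η.det = (p : ℚ_[p]) := by rw [hη, Matrix.det_fin_two]; simp
          have hidet : inv.det = (p : ℚ_[p])⁻¹ := by rw [hinv, Matrix.det_fin_two]; simp
          rw [h1, Matrix.det_mul, Matrix.det_mul, norm_mul, norm_mul, ← h1 g₂, hdet,
            hηdet, hidet, norm_inv]
          field_simp
      refine ⟨i, hip, g₁ * (η * g₂ * inv), (hSdef _).mpr (hg₁.mul hw), ?_⟩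
      rw [← hr, Matrix.mul_assoc g₁ (η * g₂ * inv) r, Matrix.mul_assoc (η * g₂) inv r,
        hinvr, Matrix.mul_one, Matrix.mul_assoc]
    · rintro ⟨i, hip, g, hg, rfl⟩
      refine ⟨g, hg, !![1, 0; (p : ℚ_[p]) * (i : ℚ_[p]), 1], ?_, ?_⟩
      · rw [hSdef]
        refine ⟨by simp, by simp, ?_, by simp, by simp⟩
        show ‖(p : ℚ_[p]) * (i : ℚ_[p])‖ ≤ 1 / p
        rw [norm_mul, normp (p := p)]
        calc 1 / (p:ℝ) * ‖(i : ℚ_[p])‖ ≤ 1 / p * 1 :=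
              mul_le_mul_of_nonneg_left (norm_nat_le_one i) (by positivity)
          _ = 1/p := by ring
      · rw [Matrix.mul_assoc]
        congr 1
        ext a b
        fin_cases a <;> fin_cases b <;> simp [mul_ent, hη] <;> ring
  · rintro i hi j hj hij
    rw [Finset.mem_range] at hi hj
    rw [Set.disjoint_left]
    rintro x ⟨g, hg, rfl⟩ ⟨g', hg', hx⟩
    rw [hSdef] at hg hg'
    obtain ⟨-, -, hc, hd, -⟩ := hg
    obtain ⟨-, -, hc', hd', -⟩ := hg'
    have h10 := congrFun (congrFun hx 1) 0
    rw [mul_ent, mul_ent] at h10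
    norm_num at h10
    have key : g 1 0 + g 1 1 * (i : ℚ_[p]) = g' 1 0 + g' 1 1 * (j : ℚ_[p]) := by
      refine mul_left_cancel₀ hp0 ?_
      linear_combination h10
    have heq : ((i : ℚ_[p])) - (j : ℚ_[p])
        = (g' 1 0 - g 1 0) + ((g' 1 1 - 1) * (j : ℚ_[p]) - (g 1 1 - 1) * (i : ℚ_[p])) := by
      linear_combination key
    have hterm : ∀ (m : Matrix (Fin 2) (Fin 2) ℚ_[p]) (k : ℕ), ‖m 1 1 - 1‖ ≤ 1/p →
        ‖(m 1 1 - 1) * (k : ℚ_[p])‖ ≤ 1 / p := by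
      intro m k hk
      rw [norm_mul]
      calc ‖m 1 1 - 1‖ * ‖(k : ℚ_[p])‖ ≤ (1/p) * 1 :=
            mul_le_mul hk (norm_nat_le_one k) (norm_nonneg _) (by positivity)
        _ = 1/p := by ring
    have hsmall : ‖(i : ℚ_[p]) - (j : ℚ_[p])‖ ≤ 1 / p := by
      rw [heq]
      refine (Padic.nonarchimedean _ _).trans (max_le ?_ ?_)
      · rw [sub_eq_add_neg]
        refine (Padic.nonarchimedean _ _).trans (max_le hc' ?_)
        rw [norm_neg]; exact hc
      · rw [sub_eq_add_neg]
        refine (Padic.nonarchimedean _ _).trans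
          (max_le (hterm g' j hd') ?_)
        rw [norm_neg]; exact hterm g i hd
    have hcast : ((i : ℚ_[p])) - (j : ℚ_[p]) = (((i : ℤ) - (j : ℤ) : ℤ) : ℚ_[p]) := by
      push_cast; ring
    have hnd : ¬ ((p : ℤ) ∣ ((i : ℤ) - (j : ℤ))) := by
      intro h
      have := Int.eq_zero_of_abs_lt_dvd h (by rw [abs_lt]; omega)
      omega
    have hbig : ‖(i : ℚ_[p]) - (j : ℚ_[p])‖ = 1 := by
      rw [hcast]
      refine le_antisymm (Padic.norm_int_le_one _) ?_
      by_contra hlt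
      push_neg at hlt
      exact hnd (Padic.norm_intCast_lt_one_iff.1 hlt)
    rw [hbig] at hsmall
    linarith
end
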